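/- For every β > 0, the free energy of the uniform model satisfies f^u(β) ≥ β − log(1+√2). -/

import Mathlib

open scoped Classical
open Filter

noncomputable section

/-- The three allowed steps: east `(1,0)`, north `(0,1)`, south `(0,-1)`. -/
def stepVec : Fin 3 → ℤ × ℤ := ![(1, 0), (0, 1), (0, -1)]

/-- Position of the partially directed walk after `k` steps,
for a configuration `s` of `L` steps. -/
def pathPos (L : ℕ) (s : Fin L → Fin 3) (k : ℕ) : ℤ × ℤ :=
  ∑ i : Fin L, if (i : ℕ) < k then stepVec (s i) else 0

/-- `s` encodes a path of `W_L` : it is self-avoiding (all visited sites are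
distinct) and its last step is horizontal (step index `0`, i.e. `(1,0)`). -/
def IsPath (L : ℕ) (s : Fin L → Fin 3) : Prop :=
  (∀ j k : ℕ, j ≤ L → k ≤ L → pathPos L s j = pathPos L s k → j = k) ∧
  (∀ hL : 0 < L, s ⟨L - 1, by omega⟩ = 0)

/-- Two lattice sites are adjacent (at euclidean distance 1). -/
def adjacent (p q : ℤ × ℤ) : Prop := |p.1 - q.1| + |p.2 - q.2| = 1

/-- Number of self-touchings: pairs `(i,j)` with `i < j - 1`, `j ≤ L`,
`‖w_i - w_j‖ = 1`. -/
def numTouch (L : ℕ) (s : Fin L → Fin 3) : ℕ :=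
  ((Finset.range (L + 1) ×ˢ Finset.range (L + 1)).filter
    (fun ij => ij.1 + 1 < ij.2 ∧ adjacent (pathPos L s ij.1) (pathPos L s ij.2))).card

/-- The set `W_L` of valid `L`-step configurations. -/
def WL (L : ℕ) : Finset (Fin L → Fin 3) := Finset.univ.filter (IsPath L)

/-- Non-uniform weight of a configuration: each step taken at the origin or
after a horizontal step has weight `1/3`, each step after a vertical step has
weight `1/2`. -/
def nuWeight (L : ℕ) (s : Fin L → Fin 3) : ℝ :=
  ∏ i : Fin L,
    if (i : ℕ) = 0 then (1 / 3 : ℝ)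
    else if s ⟨(i : ℕ) - 1, by have := i.isLt; omega⟩ = 0 then 1 / 3 else 1 / 2

/-- The two models: uniform and non-uniform. -/
inductive Model | u | nu

/-- The law `P^m_L` on `W_L`. -/
def pweight : Model → (L : ℕ) → (Fin L → Fin 3) → ℝ
  | Model.u, L, _ => 1 / ((WL L).card : ℝ)
  | Model.nu, L, s => nuWeight L s

/-- The partition function `Z^m_{L,β} = Σ_{w ∈ W_L} e^{H_{L,β}(w)} P^m_L(w)`,
with Hamiltonian `H_{L,β}(w) = β · (number of self-touchings)`. -/
def Z (m : Model) (L : ℕ) (β : ℝ) : ℝ :=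
  ∑ s ∈ WL L, Real.exp (β * (numTouch L s : ℝ)) * pweight m L s

/-- The normalizing constant `c_β = (1+e^{-β/2})/(1-e^{-β/2})`. -/
def cbeta (β : ℝ) : ℝ := (1 + Real.exp (-β / 2)) / (1 - Real.exp (-β / 2))

/-- The geometric increment law `P_β(v = k) = e^{-(β/2)|k|}/c_β`. -/
def incP (β : ℝ) (k : ℤ) : ℝ := Real.exp (-(β / 2) * |(k : ℝ)|) / cbeta β

/-- Position `V_j` of the random walk built from increments `v`. -/
def Vpos (n : ℕ) (v : Fin n → ℤ) (j : ℕ) : ℤ :=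
  ∑ i : Fin n, if (i : ℕ) < j then v i else 0

/-- The area `A_n = Σ_{j=1}^n |V_j|`. -/
def areaA (n : ℕ) (v : Fin n → ℤ) : ℤ := ∑ j ∈ Finset.Icc 1 n, |Vpos n v j|

/-- Probability under `P_β` of an event `E` depending on the first `n`
increments of the random walk. -/
def wProb (β : ℝ) (n : ℕ) (E : (Fin n → ℤ) → Prop) : ℝ :=
  ∑' v : Fin n → ℤ, if E v then ∏ i : Fin n, incP β (v i) else 0

/-- `P_β(V_{n,k})`: the walk returns to `0` at time `n` with area `A_n = k`. -/
def PV (β : ℝ) (n k : ℕ) : ℝ :=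
  wProb β n fun v => Vpos n v n = 0 ∧ areaA n v = (k : ℤ)

/-- `P_β(V_{n,q})` for rational prescribed area `q`. -/
def PVq (β : ℝ) (n : ℕ) (q : ℚ) : ℝ :=
  wProb β n fun v => Vpos n v n = 0 ∧ (areaA n v : ℚ) = q

/-- `P_β(A_n ≤ α n, V_n = 0)`. -/
def Ple (β : ℝ) (n : ℕ) (α : ℝ) : ℝ :=
  wProb β n fun v => (areaA n v : ℝ) ≤ α * n ∧ Vpos n v n = 0

/-- `P_β(A_n ≤ α n)`. -/
def PleA (β : ℝ) (n : ℕ) (α : ℝ) : ℝ :=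
  wProb β n fun v => (areaA n v : ℝ) ≤ α * n

/-- `P_β(max_{1 ≤ j ≤ n} |V_j| ≤ α)`. -/
def Pmax (β : ℝ) (n : ℕ) (α : ℝ) : ℝ :=
  wProb β n fun v => ∀ j ∈ Finset.Icc 1 n, (|Vpos n v j| : ℝ) ≤ α

/-- `n ∈ N_α`, i.e. `n ≥ 2` and `α n ∈ ℕ`. -/
def Nmem (α : ℚ) (n : ℕ) : Prop := 2 ≤ n ∧ ∃ m : ℕ, α * (n : ℚ) = (m : ℚ)

/-- `g_β(α) = sup_{N ∈ N_α} (1/N) log P_β(V_{N, αN})` for rational `α ≥ 0`. -/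
def gQ (β : ℝ) (α : ℚ) : ℝ :=
  sSup {x : ℝ | ∃ n : ℕ, Nmem α n ∧ x = Real.log (PVq β n (α * n)) / n}

/-- `Γ^u(β) = c_β/e^β`, `Γ^nu(β) = 2c_β/(3e^β)`. -/
def Gam : Model → ℝ → ℝ
  | Model.u, β => cbeta β / Real.exp β
  | Model.nu, β => 2 * cbeta β / (3 * Real.exp β)

/-- `φ^u_β = β - log(1+√2)`, `φ^nu_β = β - log 2`. -/
def phim : Model → ℝ → ℝ
  | Model.u, β => β - Real.log (1 + Real.sqrt 2)
  | Model.nu, β => β - Real.log 2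

end


noncomputable section AuxProof

lemma pathPos_succ (L : ℕ) (s : Fin L → Fin 3) (j : ℕ) (hj : j < L) :
    pathPos L s (j+1) = pathPos L s j + stepVec (s ⟨j, hj⟩) := by
  unfold pathPos
  have h : ∀ i : Fin L, (if (i : ℕ) < j+1 then stepVec (s i) else 0)
      = (if (i : ℕ) < j then stepVec (s i) else 0)
        + (if i = ⟨j, hj⟩ then stepVec (s i) else 0) := by
    intro i
    by_cases h1 : (i : ℕ) < j
    · have : (i : ℕ) < j + 1 := by omega
      have h2 : i ≠ ⟨j, hj⟩ := by
        intro he; rw [he] at h1; simp at h1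
      simp [this, h1, h2]
    · by_cases h2 : (i : ℕ) = j
      · have he : i = ⟨j, hj⟩ := Fin.ext h2
        simp [he, h1]
      · have : ¬ ((i : ℕ) < j + 1) := by omega
        have h3 : i ≠ ⟨j, hj⟩ := by
          intro he; rw [he] at h2; simp at h2
        simp [this, h1, h3]
  rw [Finset.sum_congr rfl (fun i _ => h i), Finset.sum_add_distrib]
  congr 1
  simp

lemma pathPos_zero (L : ℕ) (s : Fin L → Fin 3) : pathPos L s 0 = 0 := by
  unfold pathPos; simp

/-- zigzag step sequence with column height `h` -/
def sN (h n : ℕ) : Fin 3 :=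
  if n % (h+1) = h then 0 else if (n / (h+1)) % 2 = 0 then 1 else 2

/-- second coordinate of the zigzag path -/
def Yf (h j : ℕ) : ℤ :=
  if (j / (h+1)) % 2 = 0 then ((j % (h+1) : ℕ) : ℤ)
  else (h : ℤ) - ((j % (h+1) : ℕ) : ℤ)

lemma pathPos_sN (h L : ℕ) (j : ℕ) (hj : j ≤ L) :
    pathPos L (fun i => sN h (i : ℕ)) j = (((j / (h+1) : ℕ) : ℤ), Yf h j) := by
  induction j with
  | zero => simp [pathPos_zero, Yf]; rfl
  | succ j ih =>
    have hjL : j < L := by omega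
    rw [pathPos_succ L _ j hjL, ih (by omega)]
    have hr : j % (h+1) < h + 1 := Nat.mod_lt _ (by omega)
    have hdm := Nat.div_add_mod j (h+1)
    by_cases he : j % (h+1) = h
    · -- east step
      have hs : sN h j = 0 := by simp [sN, he]
      have h1 : j + 1 = (h+1) * (j/(h+1) + 1) := by
        rw [Nat.mul_add, Nat.mul_one]; omega
      have hdiv : (j+1) / (h+1) = j / (h+1) + 1 := by
        rw [h1, Nat.mul_div_cancel_left _ (by omega : 0 < h+1)]
      have hmod : (j+1) % (h+1) = 0 := by
        rw [h1, Nat.mul_mod_right]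
      by_cases hq : (j / (h+1)) % 2 = 0
      · have hq' : (j / (h+1) + 1) % 2 = 1 := by omega
        have hy1 : Yf h j = (h : ℤ) := by
          unfold Yf; rw [if_pos hq, he]
        have hy2 : Yf h (j+1) = (h : ℤ) := by
          unfold Yf; rw [hdiv, hmod, if_neg (by omega : ¬ (j/(h+1)+1) % 2 = 0)]
          simp
        rw [hy1, hy2, hs, hdiv]
        simp [stepVec, Prod.ext_iff]
      · have hq' : (j / (h+1) + 1) % 2 = 0 := by omega
        have hy1 : Yf h j = 0 := by
          unfold Yf; rw [if_neg hq, he]; ring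
        have hy2 : Yf h (j+1) = 0 := by
          unfold Yf; rw [hdiv, hmod, if_pos hq']; simp
        rw [hy1, hy2, hs, hdiv]
        simp [stepVec, Prod.ext_iff]
    · -- vertical step
      have h2 : j + 1 = (h+1) * (j/(h+1)) + (j%(h+1)+1) := by omega
      have hdiv : (j+1) / (h+1) = j / (h+1) := by
        rw [h2, Nat.mul_add_div (by omega : 0 < h+1),
          Nat.div_eq_of_lt (by omega : j%(h+1)+1 < h+1)]
        simp
      have hmod : (j+1) % (h+1) = j % (h+1) + 1 := by
        rw [h2, Nat.mul_add_mod, Nat.mod_eq_of_lt (by omega : j%(h+1)+1 < h+1)]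
      by_cases hq : (j / (h+1)) % 2 = 0
      · have hs : sN h j = 1 := by simp [sN, he, hq]
        have hy1 : Yf h j = ((j % (h+1) : ℕ) : ℤ) := by
          unfold Yf; rw [if_pos hq]
        have hy2 : Yf h (j+1) = ((j % (h+1) : ℕ) : ℤ) + 1 := by
          unfold Yf; rw [hdiv, hmod, if_pos hq]; push_cast; ring
        rw [hy1, hy2, hs, hdiv]
        simp [stepVec, Prod.ext_iff]
      · have hs : sN h j = 2 := by simp [sN, he, hq]
        have hy1 : Yf h j = (h : ℤ) - ((j % (h+1) : ℕ) : ℤ) := by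
          unfold Yf; rw [if_neg hq]
        have hy2 : Yf h (j+1) = (h : ℤ) - (((j % (h+1) : ℕ) : ℤ) + 1) := by
          unfold Yf; rw [hdiv, hmod, if_neg hq]; push_cast; ring
        rw [hy1, hy2, hs, hdiv]
        simp [stepVec, Prod.ext_iff]
        ring

lemma qdivmod (h q t : ℕ) (ht : t < h+1) :
    (q*(h+1)+t) / (h+1) = q ∧ (q*(h+1)+t) % (h+1) = t := by
  constructor
  · rw [show q*(h+1)+t = (h+1)*q + t from by ring,
      Nat.mul_add_div (by omega), Nat.div_eq_of_lt ht]
    omega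
  · rw [show q*(h+1)+t = (h+1)*q + t from by ring,
      Nat.mul_add_mod, Nat.mod_eq_of_lt ht]

lemma sN_mem_WL (h m : ℕ) (hm : 1 ≤ m) :
    (fun i : Fin (m*(h+1)) => sN h (i : ℕ)) ∈ WL (m*(h+1)) := by
  unfold WL
  rw [Finset.mem_filter]
  refine ⟨Finset.mem_univ _, ?_, ?_⟩
  · intro j k hj hk hpos
    rw [pathPos_sN h _ j hj, pathPos_sN h _ k hk, Prod.mk.injEq] at hpos
    obtain ⟨h1', h2⟩ := hpos
    have h1 : j / (h+1) = k / (h+1) := by exact_mod_cast h1'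
    have hdj := Nat.div_add_mod j (h+1)
    have hdk := Nat.div_add_mod k (h+1)
    rw [h1] at hdj
    unfold Yf at h2
    rw [h1] at h2
    by_cases hq : (k/(h+1)) % 2 = 0
    · rw [if_pos hq, if_pos hq] at h2
      have : j % (h+1) = k % (h+1) := by exact_mod_cast h2
      omega
    · rw [if_neg hq, if_neg hq] at h2
      have : j % (h+1) = k % (h+1) := by omega
      omega
  · intro hL
    obtain ⟨m', rfl⟩ : ∃ m', m = m' + 1 := ⟨m-1, by omega⟩
    have hmod : ((m'+1)*(h+1) - 1) % (h+1) = h := by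
      have e : (m'+1)*(h+1) - 1 = h + m'*(h+1) := by
        have : (m'+1)*(h+1) = m'*(h+1) + (h+1) := by ring
        omega
      rw [e, Nat.add_mul_mod_self_right, Nat.mod_eq_of_lt (by omega)]
    simp only []
    simp [sN, hmod]

lemma numTouch_sN (h m : ℕ) :
    (m-1)*h ≤ numTouch (m*(h+1)) (fun i => sN h (i : ℕ)) := by
  classical
  unfold numTouch
  have hcard : (m-1)*h = ((Finset.range (m-1) ×ˢ Finset.range h).card) := by
    simp
  rw [hcard]
  apply Finset.card_le_card_of_injOn
    (fun qt : ℕ×ℕ => (qt.1*(h+1)+qt.2, (qt.1+1)*(h+1)+(h-qt.2)))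
  · rintro ⟨q, t⟩ hqt
    dsimp only
    rw [Finset.mem_coe, Finset.mem_product, Finset.mem_range, Finset.mem_range] at hqt
    obtain ⟨hq, ht⟩ := hqt
    -- bounds
    have hb1 : (q+2)*(h+1) ≤ m*(h+1) := Nat.mul_le_mul_right _ (by omega)
    have he1 : (q+2)*(h+1) = q*(h+1) + 2*(h+1) := by ring
    have he2 : (q+1)*(h+1) = q*(h+1) + (h+1) := by ring
    have hj1 : q*(h+1)+t ≤ m*(h+1) := by omega
    have hj2 : (q+1)*(h+1)+(h-t) ≤ m*(h+1) := by omega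
    rw [Finset.mem_coe, Finset.mem_filter]
    refine ⟨?_, ?_, ?_⟩
    · rw [Finset.mem_product, Finset.mem_range, Finset.mem_range]
      constructor <;> omega
    · simp only []
      omega
    · have hd1 := qdivmod h q t (by omega)
      have hd2 := qdivmod h (q+1) (h-t) (by omega)
      rw [pathPos_sN h _ _ hj1, pathPos_sN h _ _ hj2]
      unfold adjacent Yf
      rw [hd1.1, hd1.2, hd2.1, hd2.2]
      simp only []
      by_cases hqp : q % 2 = 0
      · have hqp' : ¬ (q+1) % 2 = 0 := by omega
        rw [if_pos hqp, if_neg hqp']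
        have : ((h - t : ℕ) : ℤ) = (h : ℤ) - (t : ℤ) := by
          rw [Nat.cast_sub (by omega)]
        rw [this]
        push_cast
        have e1 : |(q:ℤ) - ((q:ℤ)+1)| = 1 := by
          rw [show (q:ℤ) - ((q:ℤ)+1) = -1 from by ring]; simp
        have e2 : |(t:ℤ) - ((h:ℤ) - ((h:ℤ) - (t:ℤ)))| = 0 := by
          rw [show (t:ℤ) - ((h:ℤ) - ((h:ℤ) - (t:ℤ))) = 0 from by ring]; simp
        rw [e1, e2]
        norm_num
      · have hqp' : (q+1) % 2 = 0 := by omega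
        rw [if_neg hqp, if_pos hqp']
        have : ((h - t : ℕ) : ℤ) = (h : ℤ) - (t : ℤ) := by
          rw [Nat.cast_sub (by omega)]
        rw [this]
        push_cast
        have e1 : |(q:ℤ) - ((q:ℤ)+1)| = 1 := by
          rw [show (q:ℤ) - ((q:ℤ)+1) = -1 from by ring]; simp
        have e2 : |((h:ℤ) - (t:ℤ)) - ((h:ℤ) - (t:ℤ))| = 0 := by simp
        rw [e1, e2]
        norm_num
  · rintro ⟨q, t⟩ hqt ⟨q', t'⟩ hqt' he
    rw [Finset.coe_product] at hqt hqt'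
    simp only [Set.mem_prod, Finset.mem_coe, Finset.mem_range] at hqt hqt'
    have h1 : q*(h+1)+t = q'*(h+1)+t' := congrArg Prod.fst he
    have hd1 := qdivmod h q t (by omega)
    have hd2 := qdivmod h q' t' (by omega)
    have : q = q' := by rw [← hd1.1, ← hd2.1, h1]
    subst this
    have : t = t' := by omega
    subst this
    rfl

/-- no immediate reversal (no NS or SN) -/
def NoRev (L : ℕ) (s : Fin L → Fin 3) : Prop :=
  ∀ i j : Fin L, (i : ℕ) + 1 = (j : ℕ) →
    ¬(s i = 1 ∧ s j = 2) ∧ ¬(s i = 2 ∧ s j = 1)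

lemma pathPos_succ' (L : ℕ) (s : Fin L → Fin 3) (i : Fin L) :
    pathPos L s ((i : ℕ)+1) = pathPos L s i + stepVec (s i) :=
  pathPos_succ L s i i.isLt

lemma fin1_eq (i : Fin (0+1)) : i = Fin.last 0 := Fin.ext (by omega)

lemma isPath_noRev (L : ℕ) (s : Fin L → Fin 3) (hs : IsPath L s) : NoRev L s := by
  intro i j hij
  have key : ∀ a b : Fin 3, s i = a → s j = b → stepVec a + stepVec b = 0 → False := by
    intro a b ha hb hab
    have e1 := pathPos_succ' L s i
    have e2 := pathPos_succ' L s j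
    rw [← hij] at e2
    rw [ha] at e1
    rw [hb] at e2
    have e3 : pathPos L s ((i:ℕ)+1+1) = pathPos L s (i:ℕ) := by
      rw [e2, e1, add_assoc, hab, add_zero]
    have hjL : (j : ℕ) < L := j.isLt
    have := hs.1 ((i:ℕ)+1+1) (i:ℕ) (by omega) (by omega) e3
    omega
  constructor
  · rintro ⟨h1, h2⟩
    exact key 1 2 h1 h2 (by simp [stepVec])
  · rintro ⟨h1, h2⟩
    exact key 2 1 h1 h2 (by simp [stepVec])

/-- counting sets -/
def AS (L : ℕ) : Finset (Fin (L+1) → Fin 3) :=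
  Finset.univ.filter (fun s => NoRev (L+1) s ∧ s (Fin.last L) = 0)

def BS (L : ℕ) : Finset (Fin (L+1) → Fin 3) :=
  Finset.univ.filter (fun s => NoRev (L+1) s ∧ s (Fin.last L) ≠ 0)

lemma noRev_init (L : ℕ) (s : Fin (L+2) → Fin 3) (hs : NoRev (L+2) s) :
    NoRev (L+1) (Fin.init s) := by
  intro i j hij
  have := hs i.castSucc j.castSucc (by simpa using hij)
  simpa [Fin.init] using this

lemma fin3_resolve (a b : Fin 3) (ha : a ≠ 0) (hb : b ≠ 0)
    (h1 : ¬(a = 1 ∧ b = 2)) (h2 : ¬(a = 2 ∧ b = 1)) : b = a := by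
  revert ha hb h1 h2; revert a b; decide

lemma card_noRev_split (L : ℕ) :
    (Finset.univ.filter (fun s : Fin (L+1) → Fin 3 => NoRev (L+1) s)).card
      = (AS L).card + (BS L).card := by
  unfold AS BS
  rw [← Finset.filter_filter, ← Finset.filter_filter,
    Finset.card_filter_add_card_filter_not]

lemma AS_succ (L : ℕ) : (AS (L+1)).card ≤ (AS L).card + (BS L).card := by
  rw [← card_noRev_split]
  apply Finset.card_le_card_of_injOn Fin.init
  · intro s hs
    unfold AS at hs
    rw [Finset.mem_coe, Finset.mem_filter] at hs
    rw [Finset.mem_coe, Finset.mem_filter]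
    exact ⟨Finset.mem_univ _, noRev_init L s hs.2.1⟩
  · intro s1 h1 s2 h2 he
    unfold AS at h1 h2
    simp only [Finset.coe_filter, Set.mem_setOf_eq] at h1 h2
    rw [← Fin.snoc_init_self s1, ← Fin.snoc_init_self s2, he, h1.2.2, h2.2.2]

lemma BS_succ (L : ℕ) : (BS (L+1)).card ≤ 2 * (AS L).card + (BS L).card := by
  classical
  set P : (Fin (L+2) → Fin 3) → Prop := fun s => s (Fin.castSucc (Fin.last L)) = 0
  have hsplit : (BS (L+1)).card
      = ((BS (L+1)).filter P).card + ((BS (L+1)).filter (fun s => ¬ P s)).card := by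
    rw [Finset.card_filter_add_card_filter_not]
  rw [hsplit]
  have hb1 : ((BS (L+1)).filter P).card ≤ 2 * (AS L).card := by
    have : ((BS (L+1)).filter P).card ≤ ((AS L) ×ˢ ({1, 2} : Finset (Fin 3))).card := by
      apply Finset.card_le_card_of_injOn (fun s => (Fin.init s, s (Fin.last (L+1))))
      · intro s hs
        rw [Finset.mem_coe, Finset.mem_filter] at hs
        obtain ⟨hs1, hsP⟩ := hs
        unfold BS at hs1
        rw [Finset.mem_filter] at hs1
        obtain ⟨-, hnr, hlast⟩ := hs1
        rw [Finset.mem_coe, Finset.mem_product]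
        constructor
        · unfold AS
          rw [Finset.mem_filter]
          exact ⟨Finset.mem_univ _, noRev_init L s hnr, hsP⟩
        · have : s (Fin.last (L+1)) ≠ 0 := hlast
          simp only [Finset.mem_insert, Finset.mem_singleton]
          revert this
          generalize s (Fin.last (L+1)) = a
          revert a
          decide
      · intro s1 h1 s2 h2 he
        rw [Prod.mk.injEq] at he
        rw [← Fin.snoc_init_self s1, ← Fin.snoc_init_self s2, he.1, he.2]
    simpa [mul_comm] using this
  have hb2 : ((BS (L+1)).filter (fun s => ¬ P s)).card ≤ (BS L).card := by
    apply Finset.card_le_card_of_injOn Fin.init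
    · intro s hs
      rw [Finset.mem_coe, Finset.mem_filter] at hs
      obtain ⟨hs1, hsP⟩ := hs
      unfold BS at hs1 ⊢
      rw [Finset.mem_filter] at hs1
      obtain ⟨-, hnr, hlast⟩ := hs1
      rw [Finset.mem_coe, Finset.mem_filter]
      exact ⟨Finset.mem_univ _, noRev_init L s hnr, hsP⟩
    · intro s1 h1 s2 h2 he
      rw [Finset.mem_coe, Finset.mem_filter] at h1 h2
      obtain ⟨h11, h1P⟩ := h1
      obtain ⟨h21, h2P⟩ := h2
      unfold BS at h11 h21
      rw [Finset.mem_filter] at h11 h21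
      obtain ⟨-, hnr1, hl1⟩ := h11
      obtain ⟨-, hnr2, hl2⟩ := h21
      have key : ∀ s : Fin (L+2) → Fin 3, NoRev (L+2) s →
          s (Fin.last (L+1)) ≠ 0 → s (Fin.castSucc (Fin.last L)) ≠ 0 →
          s (Fin.last (L+1)) = s (Fin.castSucc (Fin.last L)) := by
        intro s hnr hl hp
        have := hnr (Fin.castSucc (Fin.last L)) (Fin.last (L+1)) (by simp)
        exact fin3_resolve _ _ hp hl this.1 this.2
      have e1 : s1 (Fin.last (L+1)) = s2 (Fin.last (L+1)) := by
        rw [key s1 hnr1 hl1 h1P, key s2 hnr2 hl2 h2P]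
        have : Fin.init s1 (Fin.last L) = Fin.init s2 (Fin.last L) := by rw [he]
        simpa [Fin.init] using this
      rw [← Fin.snoc_init_self s1, ← Fin.snoc_init_self s2, he, e1]
  omega

lemma AS_BS_bound (L : ℕ) :
    ((AS L).card : ℝ) ≤ (1 + Real.sqrt 2)^(L+1) ∧
    ((BS L).card : ℝ) ≤ Real.sqrt 2 * (1 + Real.sqrt 2)^(L+1) := by
  have hs2 : Real.sqrt 2 * Real.sqrt 2 = 2 := Real.mul_self_sqrt (by norm_num)
  have hs2' : (0:ℝ) ≤ Real.sqrt 2 := Real.sqrt_nonneg 2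
  induction L with
  | zero =>
    constructor
    · have : (AS 0).card ≤ 1 := by
        have : AS 0 ⊆ {fun _ => 0} := by
          intro s hs
          unfold AS at hs
          rw [Finset.mem_filter] at hs
          rw [Finset.mem_singleton]
          funext i
          rw [fin1_eq i]
          exact hs.2.2
        simpa using Finset.card_le_card this
      calc ((AS 0).card : ℝ) ≤ 1 := by exact_mod_cast this
        _ ≤ (1 + Real.sqrt 2)^1 := by nlinarith
    · have : (BS 0).card ≤ 2 := by
        have : BS 0 ⊆ {fun _ => 1, fun _ => 2} := by
          intro s hs
          unfold BS at hs
          rw [Finset.mem_filter] at hs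
          have h0 : s (Fin.last 0) ≠ 0 := hs.2.2
          have : s (Fin.last 0) = 1 ∨ s (Fin.last 0) = 2 := by
            revert h0; generalize s (Fin.last 0) = a; revert a; decide
          rw [Finset.mem_insert, Finset.mem_singleton]
          rcases this with h | h
          · left
            funext i
            rw [fin1_eq i]
            exact h
          · right
            funext i
            rw [fin1_eq i]
            exact h
        calc (BS 0).card ≤ ({fun _ => 1, fun _ => 2} : Finset (Fin 1 → Fin 3)).card :=
              Finset.card_le_card this
          _ ≤ 2 := Finset.card_insert_le _ _ |>.trans (by simp)
      calc ((BS 0).card : ℝ) ≤ 2 := by exact_mod_cast this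
        _ ≤ Real.sqrt 2 * (1 + Real.sqrt 2)^1 := by nlinarith
  | succ L ih =>
    obtain ⟨ihA, ihB⟩ := ih
    constructor
    · calc ((AS (L+1)).card : ℝ) ≤ ((AS L).card : ℝ) + ((BS L).card : ℝ) := by
            exact_mod_cast AS_succ L
        _ ≤ (1 + Real.sqrt 2)^(L+1) + Real.sqrt 2 * (1 + Real.sqrt 2)^(L+1) := by
            linarith
        _ = (1 + Real.sqrt 2)^(L+2) := by ring
    · calc ((BS (L+1)).card : ℝ) ≤ 2*((AS L).card : ℝ) + ((BS L).card : ℝ) := by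
            exact_mod_cast BS_succ L
        _ ≤ 2*(1 + Real.sqrt 2)^(L+1) + Real.sqrt 2 * (1 + Real.sqrt 2)^(L+1) := by
            linarith
        _ = Real.sqrt 2 * (1 + Real.sqrt 2)^(L+2) := by
            have : (2 + Real.sqrt 2 : ℝ) = Real.sqrt 2 * (1 + Real.sqrt 2) := by
              nlinarith
            calc 2*(1 + Real.sqrt 2)^(L+1) + Real.sqrt 2 * (1 + Real.sqrt 2)^(L+1)
                = (2 + Real.sqrt 2) * (1 + Real.sqrt 2)^(L+1) := by ring
              _ = Real.sqrt 2 * (1 + Real.sqrt 2)^(L+2) := by rw [this]; ring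

lemma cardWL_le (L : ℕ) : ((WL L).card : ℝ) ≤ (1 + Real.sqrt 2)^(L+1) := by
  have hs2 : Real.sqrt 2 * Real.sqrt 2 = 2 := Real.mul_self_sqrt (by norm_num)
  have hs2' : (0:ℝ) ≤ Real.sqrt 2 := Real.sqrt_nonneg 2
  cases L with
  | zero =>
    have : (WL 0).card ≤ 1 := by
      have : (WL 0).card ≤ (Finset.univ : Finset (Fin 0 → Fin 3)).card :=
        Finset.card_le_card (Finset.filter_subset _ _)
      simpa using this
    calc ((WL 0).card : ℝ) ≤ 1 := by exact_mod_cast this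
      _ ≤ (1 + Real.sqrt 2)^1 := by nlinarith
  | succ L =>
    have hsub : WL (L+1) ⊆ Finset.univ.filter (fun s : Fin (L+1) → Fin 3 => NoRev (L+1) s) := by
      intro s hs
      unfold WL at hs
      rw [Finset.mem_filter] at hs ⊢
      exact ⟨Finset.mem_univ _, isPath_noRev _ _ hs.2⟩
    have h1 : (WL (L+1)).card ≤ (AS L).card + (BS L).card := by
      rw [← card_noRev_split]
      exact Finset.card_le_card hsub
    obtain ⟨hA, hB⟩ := AS_BS_bound L
    calc ((WL (L+1)).card : ℝ) ≤ ((AS L).card : ℝ) + ((BS L).card : ℝ) := by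
          exact_mod_cast h1
      _ ≤ (1 + Real.sqrt 2)^(L+1) + Real.sqrt 2 * (1 + Real.sqrt 2)^(L+1) := by linarith
      _ = (1 + Real.sqrt 2)^(L+2) := by ring

lemma logmu_nonneg : 0 ≤ Real.log (1 + Real.sqrt 2) := by
  apply Real.log_nonneg
  have := Real.sqrt_nonneg 2
  linarith

lemma logZ_ge (β : ℝ) (hβ : 0 ≤ β) (h m : ℕ) (hm : 1 ≤ m) :
    β * (((m-1)*h : ℕ) : ℝ) - ((m*(h+1)+1 : ℕ) : ℝ) * Real.log (1 + Real.sqrt 2)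
      ≤ Real.log (Z Model.u (m*(h+1)) β) := by
  set L := m*(h+1) with hL
  set s0 : Fin L → Fin 3 := fun i => sN h (i : ℕ) with hs0
  have hmem : s0 ∈ WL L := sN_mem_WL h m hm
  have hcardpos : 0 < (WL L).card := Finset.card_pos.mpr ⟨s0, hmem⟩
  have hcardposR : (0:ℝ) < ((WL L).card : ℝ) := by exact_mod_cast hcardpos
  have hterm : Real.exp (β * (numTouch L s0 : ℝ)) / ((WL L).card : ℝ) ≤ Z Model.u L β := by
    unfold Z pweight
    have := Finset.single_le_sum
      (f := fun s => Real.exp (β * (numTouch L s : ℝ)) * (1 / ((WL L).card : ℝ)))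
      (fun s _ => by positivity) hmem
    calc Real.exp (β * (numTouch L s0 : ℝ)) / ((WL L).card : ℝ)
        = Real.exp (β * (numTouch L s0 : ℝ)) * (1 / ((WL L).card : ℝ)) := by ring
      _ ≤ _ := this
  have hlow_pos : (0:ℝ) < Real.exp (β * (numTouch L s0 : ℝ)) / ((WL L).card : ℝ) := by
    positivity
  have hlogZ : Real.log (Real.exp (β * (numTouch L s0 : ℝ)) / ((WL L).card : ℝ))
      ≤ Real.log (Z Model.u L β) := Real.log_le_log hlow_pos hterm
  rw [Real.log_div (Real.exp_pos _).ne' hcardposR.ne', Real.log_exp] at hlogZ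
  have hcard_log : Real.log ((WL L).card : ℝ)
      ≤ ((L+1 : ℕ) : ℝ) * Real.log (1 + Real.sqrt 2) := by
    calc Real.log ((WL L).card : ℝ) ≤ Real.log ((1 + Real.sqrt 2)^(L+1)) :=
          Real.log_le_log hcardposR (cardWL_le L)
      _ = ((L+1 : ℕ) : ℝ) * Real.log (1 + Real.sqrt 2) := by
          rw [Real.log_pow]
  have htouch : (((m-1)*h : ℕ) : ℝ) ≤ (numTouch L s0 : ℝ) := by
    exact_mod_cast numTouch_sN h m
  have : β * (((m-1)*h : ℕ) : ℝ) ≤ β * (numTouch L s0 : ℝ) :=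
    mul_le_mul_of_nonneg_left htouch hβ
  calc β * (((m-1)*h : ℕ) : ℝ) - ((m*(h+1)+1 : ℕ) : ℝ) * Real.log (1 + Real.sqrt 2)
      ≤ β * (numTouch L s0 : ℝ) - Real.log ((WL L).card : ℝ) := by
        have : ((m*(h+1)+1 : ℕ) : ℝ) = ((L+1 : ℕ) : ℝ) := by rw [hL]
        rw [this]
        linarith [hcard_log]
    _ ≤ Real.log (Z Model.u L β) := hlogZ

end AuxProof

/-- For every `β > 0`, the free energy of the uniform model
satisfies `f^u(β) ≥ β - log(1+√2)`. -/
theorem stmt1 (β : ℝ) (hβ : 0 < β) (fu : ℝ)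
    (hf : Filter.Tendsto (fun L : ℕ => Real.log (Z Model.u L β) / L)
      Filter.atTop (nhds fu)) :
    fu ≥ β - Real.log (1 + Real.sqrt 2) := by
  set lm := Real.log (1 + Real.sqrt 2) with hlm
  have hlm0 : 0 ≤ lm := logmu_nonneg
  -- Step 1: for each h, fu ≥ β*h/(h+1) - lm
  have main : ∀ h : ℕ, β * h / (h+1) - lm ≤ fu := by
    intro h
    -- subsequence
    have hsub : Tendsto (fun m : ℕ => m*(h+1)) atTop atTop :=
      Filter.tendsto_atTop_mono (fun m => Nat.le_mul_of_pos_right m (by omega)) tendsto_id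
    have hflim : Tendsto (fun m : ℕ => Real.log (Z Model.u (m*(h+1)) β) / ((m*(h+1) : ℕ) : ℝ))
        atTop (nhds fu) := hf.comp hsub
    -- lower bound sequence
    have hlb : ∀ m : ℕ, 1 ≤ m →
        β * h / (h+1) - lm - (β * h + lm) / m
          ≤ Real.log (Z Model.u (m*(h+1)) β) / ((m*(h+1) : ℕ) : ℝ) := by
      intro m hm
      have hLpos : (0:ℝ) < ((m*(h+1) : ℕ) : ℝ) := by
        have : 0 < m*(h+1) := by positivity
        exact_mod_cast this
      have h1 := logZ_ge β hβ.le h m hm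
      have h2 : β * h / (h+1) - lm - (β * h + lm) / m
          ≤ (β * (((m-1)*h : ℕ) : ℝ) - ((m*(h+1)+1 : ℕ) : ℝ) * lm) / ((m*(h+1) : ℕ) : ℝ) := by
        have hm1 : (1:ℝ) ≤ (m:ℝ) := by exact_mod_cast hm
        have hmR : (0:ℝ) < (m:ℝ) := by linarith
        have hhR : (0:ℝ) ≤ (h:ℝ) := by positivity
        have hcast1 : (((m-1)*h : ℕ) : ℝ) = ((m:ℝ) - 1) * h := by
          push_cast [Nat.cast_sub hm]; ring
        have hcast2 : ((m*(h+1)+1 : ℕ) : ℝ) = (m:ℝ)*((h:ℝ)+1)+1 := by push_cast; ring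
        have hcast3 : ((m*(h+1) : ℕ) : ℝ) = (m:ℝ)*((h:ℝ)+1) := by push_cast; ring
        rw [hcast1, hcast2, hcast3]
        rw [le_div_iff₀ (by positivity : (0:ℝ) < (m:ℝ)*((h:ℝ)+1))]
        have e : (β * ↑h / (↑h + 1) - lm - (β * ↑h + lm) / ↑m) * ((m:ℝ) * ((h:ℝ) + 1))
            = β*h*m - lm*m*((h:ℝ)+1) - (β*h+lm)*((h:ℝ)+1) := by
          field_simp
        rw [e]
        nlinarith [mul_nonneg (mul_nonneg hβ.le hhR) hhR, mul_nonneg hlm0 hhR]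
      calc β * h / (h+1) - lm - (β * h + lm) / m ≤ _ := h2
        _ ≤ Real.log (Z Model.u (m*(h+1)) β) / ((m*(h+1) : ℕ) : ℝ) := by
            gcongr
    -- pass to the limit in m
    have hlbt : Tendsto (fun m : ℕ => β * h / (h+1) - lm - (β * h + lm) / m)
        atTop (nhds (β * h / (h+1) - lm - 0)) := by
      apply Tendsto.sub tendsto_const_nhds
      exact Tendsto.div_atTop tendsto_const_nhds tendsto_natCast_atTop_atTop
    have := le_of_tendsto_of_tendsto hlbt hflim
      (Filter.eventually_atTop.mpr ⟨1, hlb⟩)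
    linarith
  -- pass to the limit in h
  have hfin : ∀ h : ℕ, β - β/((h:ℝ)+1) - lm ≤ fu := by
    intro h
    have he : β * h / ((h:ℝ)+1) = β - β/((h:ℝ)+1) := by
      field_simp
      ring
    have := main h
    rw [he] at this
    linarith
  have hht : Tendsto (fun h : ℕ => β - β/((h:ℝ)+1) - lm) atTop (nhds (β - 0 - lm)) := by
    apply Tendsto.sub _ tendsto_const_nhds
    apply Tendsto.sub tendsto_const_nhds
    apply Tendsto.div_atTop tendsto_const_nhds
    exact Filter.tendsto_atTop_add_const_right atTop 1 tendsto_natCast_atTop_atTop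
  have := le_of_tendsto hht (Filter.Eventually.of_forall hfin)
  rw [ge_iff_le, hlm] at *
  linarith
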